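/- Let T be a normal τ-measurable operator with μ_t(T) → 0 as t → ∞, with spectral measure ν_T on ℂ given by ν_T(B) = τ(E_T(B)). Then for any α ∈ ℂ with |α| ≤ 1 and 0 < r < s < ∞, |Φ(r,s; αT) − α Φ(r,s; T)| ≤ r τ(E_{|T|}(r,∞)) + s τ(E_{|T|}(s,∞)), where Φ(r,s;T) = ∫_{r<|z|≤s} z dν_T(z). -/

import Mathlib

open MeasureTheory

theorem stmt_9 (ν : Measure ℂ) (α : ℂ) (hα : ‖α‖ ≤ 1)
    (hfin : ∀ x : ℝ, 0 < x → ν {z : ℂ | x < ‖z‖} < ⊤)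
    (r s : ℝ) (hr : 0 < r) (hrs : r < s) :
    ‖(∫ z in {z : ℂ | r < ‖z‖ ∧ ‖z‖ ≤ s}, z ∂(Measure.map (fun z => α * z) ν)) -
        α * ∫ z in {z : ℂ | r < ‖z‖ ∧ ‖z‖ ≤ s}, z ∂ν‖ ≤
      r * (ν {z : ℂ | r < ‖z‖}).toReal + s * (ν {z : ℂ | s < ‖z‖}).toReal := by
  have hs : 0 < s := hr.trans hrs
  set A : Set ℂ := {z : ℂ | r < ‖z‖ ∧ ‖z‖ ≤ s} with hAdef
  have hAm : MeasurableSet A :=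
    (measurableSet_lt measurable_const measurable_norm).inter
      (measurableSet_le measurable_norm measurable_const)
  have hRHS : 0 ≤ r * (ν {z : ℂ | r < ‖z‖}).toReal + s * (ν {z : ℂ | s < ‖z‖}).toReal := by
    positivity
  by_cases hα0 : α = 0
  · subst hα0
    have hpre : (fun z : ℂ => (0:ℂ) * z) ⁻¹' A = ∅ := by
      ext z; simp [hAdef]; intro h; linarith
    have h0 : (Measure.map (fun z : ℂ => (0:ℂ) * z) ν) A = 0 := by
      rw [Measure.map_apply (by fun_prop) hAm, hpre]; simp
    have : (Measure.map (fun z : ℂ => (0:ℂ) * z) ν).restrict A = 0 :=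
      Measure.restrict_eq_zero.mpr h0
    rw [this]
    simpa using hRHS
  · have ha : 0 < ‖α‖ := norm_pos_iff.mpr hα0
    set B : Set ℂ := {z : ℂ | r / ‖α‖ < ‖z‖ ∧ ‖z‖ ≤ s / ‖α‖} with hBdef
    have hBm : MeasurableSet B :=
      (measurableSet_lt measurable_const measurable_norm).inter
        (measurableSet_le measurable_norm measurable_const)
    have hpre : (fun z : ℂ => α * z) ⁻¹' A = B := by
      ext z
      simp only [Set.mem_preimage, hAdef, hBdef, Set.mem_setOf_eq, norm_mul]
      constructor
      · rintro ⟨h1, h2⟩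
        exact ⟨(div_lt_iff₀ ha).mpr (by linarith [mul_comm ‖α‖ ‖z‖ ▸ h1]),
          (le_div_iff₀ ha).mpr (by rw [mul_comm]; exact h2)⟩
      · rintro ⟨h1, h2⟩
        exact ⟨by rw [mul_comm]; exact (div_lt_iff₀ ha).mp h1,
          by rw [mul_comm]; exact (le_div_iff₀ ha).mp h2⟩
    have hemb : MeasurableEmbedding (fun z : ℂ => α * z) := measurableEmbedding_mulLeft₀ hα0
    rw [hemb.setIntegral_map]
    rw [hpre]
    rw [integral_const_mul]
    rw [← mul_sub, norm_mul]
    -- integrability helper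
    have hint : ∀ (x y : ℝ), 0 < x → IntegrableOn (fun z : ℂ => z)
        {z : ℂ | x < ‖z‖ ∧ ‖z‖ ≤ y} ν := by
      intro x y hx
      have hm : MeasurableSet {z : ℂ | x < ‖z‖ ∧ ‖z‖ ≤ y} :=
        (measurableSet_lt measurable_const measurable_norm).inter
          (measurableSet_le measurable_norm measurable_const)
      apply Measure.integrableOn_of_bounded (M := y)
      · exact ne_of_lt (lt_of_le_of_lt
          (measure_mono (fun z hz => hz.1)) (hfin x hx))
      · exact aestronglyMeasurable_id
      · exact (ae_restrict_iff' hm).mpr (ae_of_all _ (fun z hz => hz.2))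
    have hintA : IntegrableOn (fun z : ℂ => z) A ν := hint r s hr
    have hintB : IntegrableOn (fun z : ℂ => z) B ν := hint (r / ‖α‖) (s / ‖α‖) (by positivity)
    -- decompose
    have hdecA : ∫ z in A, z ∂ν = (∫ z in A ∩ B, z ∂ν) + ∫ z in A \ B, z ∂ν := by
      have hdisj : Disjoint (A ∩ B) (A \ B) :=
        Set.disjoint_sdiff_right.mono_left Set.inter_subset_right
      have h := setIntegral_union (f := fun z : ℂ => z) (μ := ν) hdisj (hAm.diff hBm)
        (hintA.mono_set Set.inter_subset_left) (hintA.mono_set Set.diff_subset)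
      rw [Set.inter_union_diff] at h
      exact h
    have hdecB : ∫ z in B, z ∂ν = (∫ z in A ∩ B, z ∂ν) + ∫ z in B \ A, z ∂ν := by
      have hdisj : Disjoint (A ∩ B) (B \ A) :=
        Set.disjoint_sdiff_right.mono_left Set.inter_subset_left
      have h := setIntegral_union (f := fun z : ℂ => z) (μ := ν) hdisj (hBm.diff hAm)
        (hintB.mono_set Set.inter_subset_right) (hintB.mono_set Set.diff_subset)
      have hu : A ∩ B ∪ B \ A = B := by
        rw [Set.inter_comm]; exact Set.inter_union_diff B A
      rw [hu] at h
      exact h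
    have hsub : (∫ z in B, z ∂ν) - ∫ z in A, z ∂ν =
        (∫ z in B \ A, z ∂ν) - ∫ z in A \ B, z ∂ν := by
      rw [hdecA, hdecB]; ring
    rw [hsub]
    -- set inclusions
    have hAB : A \ B ⊆ {z : ℂ | r < ‖z‖ ∧ ‖z‖ ≤ r / ‖α‖} := by
      rintro z ⟨⟨h1, h2⟩, hnB⟩
      refine ⟨h1, ?_⟩
      by_contra hlt
      push_neg at hlt
      exact hnB ⟨hlt, h2.trans ((le_div_iff₀ ha).mpr (by nlinarith))⟩
    have hBA : B \ A ⊆ {z : ℂ | s < ‖z‖ ∧ ‖z‖ ≤ s / ‖α‖} := by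
      rintro z ⟨⟨h1, h2⟩, hnA⟩
      have hrz : r < ‖z‖ := lt_of_le_of_lt (le_div_self hr.le ha hα) h1
      refine ⟨?_, h2⟩
      by_contra hlt
      push_neg at hlt
      exact hnA ⟨hrz, hlt⟩
    -- measure bounds
    have hmAB : ν (A \ B) ≤ ν {z : ℂ | r < ‖z‖} :=
      measure_mono (fun z hz => (hAB hz).1)
    have hmBA : ν (B \ A) ≤ ν {z : ℂ | s < ‖z‖} :=
      measure_mono (fun z hz => (hBA hz).1)
    have hfinAB : ν (A \ B) < ⊤ := lt_of_le_of_lt hmAB (hfin r hr)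
    have hfinBA : ν (B \ A) < ⊤ := lt_of_le_of_lt hmBA (hfin s hs)
    -- norm bounds on integrals
    have hb1 : ‖∫ z in B \ A, z ∂ν‖ ≤ (s / ‖α‖) * (ν (B \ A)).toReal := by
      apply norm_setIntegral_le_of_norm_le_const hfinBA
      · intro z hz; exact (hBA hz).2
    have hb2 : ‖∫ z in A \ B, z ∂ν‖ ≤ (r / ‖α‖) * (ν (A \ B)).toReal := by
      apply norm_setIntegral_le_of_norm_le_const hfinAB
      · intro z hz; exact (hAB hz).2
    have htr1 : (ν (B \ A)).toReal ≤ (ν {z : ℂ | s < ‖z‖}).toReal :=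
      ENNReal.toReal_mono (ne_of_lt (hfin s hs)) hmBA
    have htr2 : (ν (A \ B)).toReal ≤ (ν {z : ℂ | r < ‖z‖}).toReal :=
      ENNReal.toReal_mono (ne_of_lt (hfin r hr)) hmAB
    have hb1' : ‖∫ z in B \ A, z ∂ν‖ ≤ (s / ‖α‖) * (ν {z : ℂ | s < ‖z‖}).toReal :=
      hb1.trans (mul_le_mul_of_nonneg_left htr1 (by positivity))
    have hb2' : ‖∫ z in A \ B, z ∂ν‖ ≤ (r / ‖α‖) * (ν {z : ℂ | r < ‖z‖}).toReal :=
      hb2.trans (mul_le_mul_of_nonneg_left htr2 (by positivity))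
    have e1 : ‖α‖ * (s / ‖α‖) = s := by rw [mul_comm, div_mul_cancel₀ _ (ne_of_gt ha)]
    have e2 : ‖α‖ * (r / ‖α‖) = r := by rw [mul_comm, div_mul_cancel₀ _ (ne_of_gt ha)]
    calc ‖α‖ * ‖(∫ z in B \ A, z ∂ν) - ∫ z in A \ B, z ∂ν‖
        ≤ ‖α‖ * (‖∫ z in B \ A, z ∂ν‖ + ‖∫ z in A \ B, z ∂ν‖) :=
          mul_le_mul_of_nonneg_left (norm_sub_le _ _) ha.le
      _ ≤ ‖α‖ * ((s / ‖α‖) * (ν {z : ℂ | s < ‖z‖}).toReal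
            + (r / ‖α‖) * (ν {z : ℂ | r < ‖z‖}).toReal) :=
          mul_le_mul_of_nonneg_left (add_le_add hb1' hb2') ha.le
      _ = r * (ν {z : ℂ | r < ‖z‖}).toReal + s * (ν {z : ℂ | s < ‖z‖}).toReal := by
          rw [mul_add, ← mul_assoc, ← mul_assoc, e1, e2]; ring
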